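/- Let G be an oriented graph obtained from a tournament by deleting a matching and let C = a_0 ↠ a_1 ↠ ... ↠ a_{k-1} ↠ a_0 be a special cycle in G. Then for each i, the unique non-neighbor of a_i in G is a_{i+k/2} (indices modulo k). -/

import Mathlib

variable {V : Type*}

/-- An oriented graph: no loops or 2-cycles (asymmetric relation). -/
def Oriented (E : V → V → Prop) : Prop := ∀ u v : V, E u v → ¬ E v u

/-- A tournament: oriented and any two distinct vertices are joined by an arc. -/
def Tournament (E : V → V → Prop) : Prop :=
  Oriented E ∧ ∀ u v : V, u ≠ v → E u v ∨ E v u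

def outN (E : V → V → Prop) (v : V) : Set V := {u | E v u}

def inN (E : V → V → Prop) (v : V) : Set V := {u | E u v}

/-- The second out-neighborhood: vertices at directed distance exactly 2. -/
def secondN (E : V → V → Prop) (v : V) : Set V :=
  {u | ¬ E v u ∧ u ≠ v ∧ ∃ w, E v w ∧ E w u}

/-- `u` and `v` are distinct non-adjacent vertices (a missing edge). -/
def NonAdj (E : V → V → Prop) (u v : V) : Prop := u ≠ v ∧ ¬ E u v ∧ ¬ E v u

/-- The missing edges form a matching: every vertex has at most one non-neighbor. -/
def MissingMatching (E : V → V → Prop) : Prop :=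
  ∀ u v w : V, NonAdj E u v → NonAdj E u w → v = w

/-- A special arc `x ↠ y`: an arc such that `x` is not in the second
out-neighborhood of `y`. -/
def SpecialArc (E : V → V → Prop) (x y : V) : Prop :=
  E x y ∧ ¬ ∃ u, E y u ∧ E u x

/-- Number of forward arcs of an ordering (list) of the vertices. -/
noncomputable def fwd (E : V → V → Prop) (L : List V) : ℕ :=
  Set.ncard {p : ℕ × ℕ | p.1 < p.2 ∧ ∃ (h1 : p.1 < L.length) (h2 : p.2 < L.length),
    E (L.get ⟨p.1, h1⟩) (L.get ⟨p.2, h2⟩)}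

/-- A median order: an enumeration of all vertices maximizing the number of
forward arcs. -/
def MedianOrder (E : V → V → Prop) (L : List V) : Prop :=
  L.Nodup ∧ (∀ v : V, v ∈ L) ∧
    ∀ M : List V, M.Nodup → (∀ v : V, v ∈ M) → fwd E M ≤ fwd E L

/-- A module: any two vertices inside have the same in- and out-neighborhoods
outside. -/
def IsModule (E : V → V → Prop) (I : Set V) : Prop :=
  ∀ u ∈ I, ∀ v ∈ I, ∀ w, w ∉ I → (E u w ↔ E v w) ∧ (E w u ↔ E w v)

/-- 2-degeneracy of the underlying undirected graph. -/
def TwoDegenerate (E : V → V → Prop) : Prop :=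
  ∀ S : Set V, S.Nonempty → ∃ v ∈ S, Set.ncard {u | u ∈ S ∧ u ≠ v ∧ (E u v ∨ E v u)} ≤ 2

/-- The relation `(a,b) R (c,d)`: the 4-cycle `a → c ↠ b → d ↠ a`. -/
def Rrel (E : V → V → Prop) (a b c d : V) : Prop :=
  E a c ∧ SpecialArc E c b ∧ E b d ∧ SpecialArc E d a

theorem stmt5 (E : V → V → Prop) (hO : Oriented E) (hM : MissingMatching E)
    (k : ℕ) (hk : 3 ≤ k) (a : ℕ → V)
    (hinj : ∀ i j, i < k → j < k → a i = a j → i = j)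
    (hcyc : ∀ i, i < k → SpecialArc E (a i) (a ((i + 1) % k))) :
    ∀ i, i < k → NonAdj E (a i) (a ((i + k / 2) % k)) ∧
      ∀ w, NonAdj E (a i) w → w = a ((i + k / 2) % k) := by
  classical
  haveI : NeZero k := ⟨by omega⟩
  haveI : Fact (1 < k) := ⟨by omega⟩
  set b : ZMod k → V := fun i => a i.val with hb
  have binj : ∀ x y : ZMod k, b x = b y → x = y := by
    intro x y hxy
    exact ZMod.val_injective k (hinj x.val y.val (ZMod.val_lt x) (ZMod.val_lt y) hxy)
  have castinj : ∀ s t : ℕ, s < k → t < k → ((s : ZMod k) = (t : ZMod k)) → s = t := by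
    intro s t hs ht h
    have h2 := congrArg ZMod.val h
    rwa [ZMod.val_natCast, ZMod.val_natCast, Nat.mod_eq_of_lt hs, Nat.mod_eq_of_lt ht] at h2
  have bcyc : ∀ i : ZMod k, SpecialArc E (b i) (b (i + 1)) := by
    intro i
    have h := hcyc i.val (ZMod.val_lt i)
    have he : a ((i.val + 1) % k) = b (i + 1) := by
      show a _ = a (i + 1).val
      congr 1
      rw [ZMod.val_add, ZMod.val_one]
    rwa [he] at h
  have nsymm : ∀ u v : V, NonAdj E u v → NonAdj E v u := by
    rintro u v ⟨h1, h2, h3⟩; exact ⟨h1.symm, h3, h2⟩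
  -- key cast helper: a + b = k implies casts cancel
  have castk : ∀ s t : ℕ, s + t = k → ((s : ZMod k) + (t : ZMod k) = 0) := by
    intro s t h
    rw [← Nat.cast_add, h, ZMod.natCast_self]
  -- existence of a "non-out-neighbor step" for Nat.find
  have hQ : ∀ i : ZMod k, ¬ E (b i) (b (i + ((k - 2 + 1 : ℕ) : ZMod k))) := by
    intro i hcon
    have h1 : (((k - 2 + 1 : ℕ)) : ZMod k) = -1 := by
      have h2 : ((k - 2 + 1) + 1 : ℕ) = k := by omega
      have := castk (k - 2 + 1) 1 h2
      have h3 : ((1 : ℕ) : ZMod k) = 1 := by push_cast; ring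
      rw [h3] at this
      linear_combination this
    rw [h1] at hcon
    have h2 := (bcyc (i + -1)).1
    have h3 : i + -1 + 1 = i := by ring
    rw [h3] at h2
    exact hO _ _ h2 hcon
  have hex : ∀ i : ZMod k, ∃ t : ℕ, ¬ E (b i) (b (i + ((t + 1 : ℕ) : ZMod k))) :=
    fun i => ⟨k - 2, hQ i⟩
  set d : ZMod k → ℕ := fun i => Nat.find (hex i) + 1 with hd
  have d_not : ∀ i, ¬ E (b i) (b (i + ((d i : ℕ) : ZMod k))) := fun i => Nat.find_spec (hex i)
  have d_min : ∀ i s, 1 ≤ s → s < d i → E (b i) (b (i + ((s : ℕ) : ZMod k))) := by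
    intro i s h1 h2
    have h3 : s - 1 < Nat.find (hex i) := by
      have : d i = Nat.find (hex i) + 1 := rfl
      omega
    have h4 := Nat.find_min (hex i) h3
    have h5 : s - 1 + 1 = s := by omega
    rw [h5] at h4
    exact not_not.mp h4
  have d_ge : ∀ i, 2 ≤ d i := by
    intro i
    have h1 : E (b i) (b (i + (((1:ℕ)) : ZMod k))) := by
      have := (bcyc i).1
      have h2 : ((1 : ℕ) : ZMod k) = 1 := by push_cast; ring
      rwa [h2]
    by_contra h
    have h0 : Nat.find (hex i) = 0 := by
      have : d i = Nat.find (hex i) + 1 := rfl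
      omega
    have h3 := Nat.find_spec (hex i)
    rw [h0] at h3
    exact h3 h1
  have d_le : ∀ i, d i ≤ k - 1 := by
    intro i
    have h1 : Nat.find (hex i) ≤ k - 2 := Nat.find_le (hQ i)
    have : d i = Nat.find (hex i) + 1 := rfl
    omega
  have d_not2 : ∀ i, ¬ E (b (i + ((d i : ℕ) : ZMod k))) (b i) := by
    intro i hcon
    have hge := d_ge i
    have h1 : E (b i) (b (i + ((d i - 1 : ℕ) : ZMod k))) := d_min i (d i - 1) (by omega) (by omega)
    have h2 := (bcyc (i + ((d i - 1 : ℕ) : ZMod k))).2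
    have h3 : i + ((d i - 1 : ℕ) : ZMod k) + 1 = i + ((d i : ℕ) : ZMod k) := by
      have h4 : (d i - 1 : ℕ) + 1 = d i := by omega
      rw [← h4]
      push_cast
      ring
    rw [h3] at h2
    exact h2 ⟨b i, hcon, h1⟩
  have nadjD : ∀ i, NonAdj E (b i) (b (i + ((d i : ℕ) : ZMod k))) := by
    intro i
    refine ⟨?_, d_not i, d_not2 i⟩
    intro h
    have h1 := binj _ _ h
    have h2 : ((d i : ℕ) : ZMod k) = ((0 : ℕ) : ZMod k) := by
      have := left_eq_add.mp h1
      simpa using this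
    have := castinj (d i) 0 (by have := d_le i; omega) (by omega) h2
    have := d_ge i
    omega
  have finj : ∀ x y : ZMod k, x + ((d x : ℕ) : ZMod k) = y + ((d y : ℕ) : ZMod k) → x = y := by
    intro x y h
    have h1 : NonAdj E (b (x + ((d x : ℕ) : ZMod k))) (b x) := nsymm _ _ (nadjD x)
    have h2 : NonAdj E (b (x + ((d x : ℕ) : ZMod k))) (b y) := by
      rw [h]; exact nsymm _ _ (nadjD y)
    exact binj _ _ (hM _ _ _ h1 h2)
  have dIv : ∀ i, d (i + ((d i : ℕ) : ZMod k)) = k - d i := by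
    intro i
    have h1 : NonAdj E (b (i + ((d i : ℕ) : ZMod k))) (b i) := nsymm _ _ (nadjD i)
    have h2 := nadjD (i + ((d i : ℕ) : ZMod k))
    have h3 : b i = b (i + ((d i : ℕ) : ZMod k) + ((d (i + ((d i : ℕ) : ZMod k)) : ℕ) : ZMod k)) :=
      hM _ _ _ h1 h2
    have h4 := binj _ _ h3
    set j := i + ((d i : ℕ) : ZMod k) with hj
    have h5 : ((d i + d j : ℕ) : ZMod k) = 0 := by
      rw [Nat.cast_add]
      have h6 : i = i + (((d i : ℕ) : ZMod k) + ((d j : ℕ) : ZMod k)) := by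
        rw [← add_assoc]; exact h4
      exact (left_eq_add.mp h6)
    have h7 : k ∣ (d i + d j) := (CharP.cast_eq_zero_iff (ZMod k) k _).mp h5
    have g1 := d_ge i; have g2 := d_ge j; have g3 := d_le i; have g4 := d_le j
    have h8 : k ≤ d i + d j := Nat.le_of_dvd (by omega) h7
    have h9 : k ∣ (d i + d j - k) := Nat.dvd_sub h7 dvd_rfl
    have h10 : d i + d j - k = 0 := by
      by_contra h
      have := Nat.le_of_dvd (by omega) h9
      omega
    omega
  -- nesting is impossible
  have nest : ∀ (i : ZMod k) (s : ℕ), 1 ≤ s → s + d (i + ((s : ℕ) : ZMod k)) < d i → False := by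
    intro i s hs hlt
    have ht2 : 2 ≤ d (i + ((s : ℕ) : ZMod k)) := d_ge _
    have hdk : d i ≤ k - 1 := d_le i
    have h1 : E (b i) (b (i + (((s + d (i + ((s : ℕ) : ZMod k))) : ℕ) : ZMod k))) :=
      d_min i _ (by omega) hlt
    have hjt : i + (((s + d (i + ((s : ℕ) : ZMod k))) : ℕ) : ZMod k)
        = (i + ((s : ℕ) : ZMod k)) + ((d (i + ((s : ℕ) : ZMod k)) : ℕ) : ZMod k) := by
      push_cast; ring
    have hdj : d (i + (((s + d (i + ((s : ℕ) : ZMod k))) : ℕ) : ZMod k))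
        = k - d (i + ((s : ℕ) : ZMod k)) := by
      rw [hjt]; exact dIv _
    have h2 : E (b (i + (((s + d (i + ((s : ℕ) : ZMod k))) : ℕ) : ZMod k)))
        (b ((i + (((s + d (i + ((s : ℕ) : ZMod k))) : ℕ) : ZMod k))
          + (((k - s - d (i + ((s : ℕ) : ZMod k))) : ℕ) : ZMod k))) :=
      d_min _ _ (by omega) (by rw [hdj]; omega)
    have h3 : (i + (((s + d (i + ((s : ℕ) : ZMod k))) : ℕ) : ZMod k))
        + (((k - s - d (i + ((s : ℕ) : ZMod k))) : ℕ) : ZMod k) = i := by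
      rw [add_assoc]
      have := castk (s + d (i + ((s : ℕ) : ZMod k))) (k - s - d (i + ((s : ℕ) : ZMod k)))
        (by omega)
      rw [this, add_zero]
    rw [h3] at h2
    exact hO _ _ h1 h2
  -- the chord from inside the interval lands strictly outside
  have gl : ∀ (i : ZMod k) (s : ℕ), 1 ≤ s → s < d i →
      d i < (s + d (i + ((s : ℕ) : ZMod k))) % k ∧ (s + d (i + ((s : ℕ) : ZMod k))) % k < k := by
    intro i s hs hsd
    have ht2 : 2 ≤ d (i + ((s : ℕ) : ZMod k)) := d_ge _
    have htk : d (i + ((s : ℕ) : ZMod k)) ≤ k - 1 := d_le _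
    have hdk : d i ≤ k - 1 := d_le i
    by_cases hc : s + d (i + ((s : ℕ) : ZMod k)) < k
    · rw [Nat.mod_eq_of_lt hc]
      refine ⟨?_, hc⟩
      rcases lt_trichotomy (s + d (i + ((s : ℕ) : ZMod k))) (d i) with h | h | h
      · exact absurd h (by intro hh; exact (nest i s hs hh))
      · exfalso
        have he : (i + ((s : ℕ) : ZMod k)) + ((d (i + ((s : ℕ) : ZMod k)) : ℕ) : ZMod k)
            = i + ((d i : ℕ) : ZMod k) := by
          rw [← h]; push_cast; ring
        have h1 := finj _ _ he
        have h2 : ((s : ℕ) : ZMod k) = ((0 : ℕ) : ZMod k) := by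
          have := left_eq_add.mp h1.symm
          simpa using this
        have := castinj s 0 (by omega) (by omega) h2
        omega
      · exact h
    · exfalso
      push_neg at hc
      have hg0 : s + d (i + ((s : ℕ) : ZMod k)) ≠ k := by
        intro h
        have he : (i + ((s : ℕ) : ZMod k)) + ((d (i + ((s : ℕ) : ZMod k)) : ℕ) : ZMod k) = i := by
          rw [add_assoc]
          have := castk s (d (i + ((s : ℕ) : ZMod k))) h
          rw [← Nat.cast_add] at this ⊢
          rw [this, add_zero]
        have hna : NonAdj E (b i) (b (i + ((s : ℕ) : ZMod k))) := by
          have h2 := nadjD (i + ((s : ℕ) : ZMod k))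
          rw [he] at h2
          exact nsymm _ _ h2
        have h3 := hM _ _ _ hna (nadjD i)
        have h4 := binj _ _ h3
        have h5 : ((s : ℕ) : ZMod k) = ((d i : ℕ) : ZMod k) := add_left_cancel h4
        have := castinj s (d i) (by omega) (by omega) h5
        omega
      -- wrap-around: g = s + t - k, chord nested the other way
      have hcast : i + (((s + d (i + ((s : ℕ) : ZMod k)) - k) : ℕ) : ZMod k)
          = (i + ((s : ℕ) : ZMod k)) + ((d (i + ((s : ℕ) : ZMod k)) : ℕ) : ZMod k) := by
        have h1 : ((s + d (i + ((s : ℕ) : ZMod k)) - k) + k : ℕ) = s + d (i + ((s : ℕ) : ZMod k)) := by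
          omega
        have h2 : (((s + d (i + ((s : ℕ) : ZMod k)) - k) : ℕ) : ZMod k)
            = ((s + d (i + ((s : ℕ) : ZMod k)) : ℕ) : ZMod k) := by
          calc (((s + d (i + ((s : ℕ) : ZMod k)) - k) : ℕ) : ZMod k)
              = (((s + d (i + ((s : ℕ) : ZMod k)) - k) : ℕ) : ZMod k) + ((k : ℕ) : ZMod k) := by
                rw [ZMod.natCast_self, add_zero]
            _ = (((s + d (i + ((s : ℕ) : ZMod k)) - k) + k : ℕ) : ZMod k) := by push_cast; ring
            _ = _ := by rw [h1]
        rw [h2]; push_cast; ring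
      have hdg : d (i + (((s + d (i + ((s : ℕ) : ZMod k)) - k) : ℕ) : ZMod k))
          = k - d (i + ((s : ℕ) : ZMod k)) := by
        rw [hcast]; exact dIv _
      exact nest i (s + d (i + ((s : ℕ) : ZMod k)) - k) (by omega) (by rw [hdg]; omega)
  -- counting: 2 * d i = k
  have key : ∀ j : ZMod k, d j - 1 ≤ k - d j - 1 := by
    intro j
    have hcard : (Finset.Ico 1 (d j)).card ≤ (Finset.Ioo (d j) k).card := by
      apply Finset.card_le_card_of_injOn (fun s => (s + d (j + ((s : ℕ) : ZMod k))) % k)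
      · intro s hs
        rw [Finset.mem_coe, Finset.mem_Ico] at hs
        rw [Finset.mem_coe, Finset.mem_Ioo]
        exact gl j s hs.1 hs.2
      · intro s hs s' hs' hgg
        simp only [Finset.coe_Ico, Set.mem_Ico] at hs hs'
        have hdl := d_le j
        have e1 : (j + ((s : ℕ) : ZMod k)) + ((d (j + ((s : ℕ) : ZMod k)) : ℕ) : ZMod k)
            = (j + ((s' : ℕ) : ZMod k)) + ((d (j + ((s' : ℕ) : ZMod k)) : ℕ) : ZMod k) := by
          have c1 : ∀ s : ℕ, (j + ((s : ℕ) : ZMod k)) + ((d (j + ((s : ℕ) : ZMod k)) : ℕ) : ZMod k)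
              = j + ((((s + d (j + ((s : ℕ) : ZMod k))) % k : ℕ)) : ZMod k) := by
            intro s
            rw [ZMod.natCast_mod]
            push_cast; ring
          have hgg2 : (s + d (j + ((s : ℕ) : ZMod k))) % k
              = (s' + d (j + ((s' : ℕ) : ZMod k))) % k := hgg
          rw [c1 s, c1 s', hgg2]
        have e2 := finj _ _ e1
        have e3 : ((s : ℕ) : ZMod k) = ((s' : ℕ) : ZMod k) := add_left_cancel e2
        exact castinj s s' (by omega) (by omega) e3
    rw [Nat.card_Ico, Nat.card_Ioo] at hcard
    exact hcard
  have halfk : ∀ i : ZMod k, 2 * d i = k := by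
    intro i
    have h1 := key i
    have h2 := key (i + ((d i : ℕ) : ZMod k))
    rw [dIv i] at h2
    have g1 := d_ge i; have g3 := d_le i
    omega
  -- final assembly
  intro i hik
  have hd2 : d ((i : ℕ) : ZMod k) = k / 2 := by
    have := halfk ((i : ℕ) : ZMod k)
    omega
  have e1 : a i = b ((i : ℕ) : ZMod k) := by
    show a i = a (((i : ℕ) : ZMod k)).val
    rw [ZMod.val_natCast, Nat.mod_eq_of_lt hik]
  have e2 : a ((i + k / 2) % k)
      = b (((i : ℕ) : ZMod k) + ((d ((i : ℕ) : ZMod k) : ℕ) : ZMod k)) := by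
    rw [hd2]
    show a _ = a ((((i : ℕ) : ZMod k) + ((k / 2 : ℕ) : ZMod k)).val)
    congr 1
    rw [ZMod.val_add, ZMod.val_natCast, ZMod.val_natCast,
      Nat.mod_eq_of_lt hik, Nat.mod_eq_of_lt (by omega : k / 2 < k)]
  rw [e1, e2]
  exact ⟨nadjD _, fun w hw => hM _ _ _ hw (nadjD _)⟩
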